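/- Let t(n,x) be a solution of the semi-discrete chain t_{1,x} = t_x + e^{(t+t_1)/2} (the Adler–Startsev chain). Then the function F = e^{(t_1 − t)/2} + e^{(t_1 − t_2)/2} is an x-integral: d/dx [ e^{(t_1−t)/2} + e^{(t_1−t_2)/2} ] = 0 along solutions. -/

import Mathlib

/-- For the Adler–Startsev chain `t_{1,x} = t_x + e^{(t+t_1)/2}`, the function
`F = e^{(t_1−t)/2} + e^{(t_1−t_2)/2}` is an x-integral. -/
theorem xIntegral_AdlerStartsev_chain (t t' : ℤ → ℝ → ℝ)
    (hderiv : ∀ n x, HasDerivAt (t n) (t' n x) x)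
    (hchain : ∀ n x, t' (n + 1) x = t' n x + Real.exp ((t n x + t (n + 1) x) / 2))
    (n : ℤ) (x : ℝ) :
    HasDerivAt (fun y =>
      Real.exp ((t (n + 1) y - t n y) / 2) + Real.exp ((t (n + 1) y - t (n + 2) y) / 2)) 0 x := by
  have h1 : HasDerivAt (fun y => (t (n + 1) y - t n y) / 2)
      (Real.exp ((t n x + t (n + 1) x) / 2) / 2) x := by
    have h := ((hderiv (n + 1) x).sub (hderiv n x)).div_const 2
    rw [hchain n x, add_sub_cancel_left] at h
    exact h
  have hc2 : t' (n + 2) x = t' (n + 1) x + Real.exp ((t (n + 1) x + t (n + 2) x) / 2) := by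
    have h := hchain (n + 1) x
    rwa [show (n : ℤ) + 1 + 1 = n + 2 by ring] at h
  have h2 : HasDerivAt (fun y => (t (n + 1) y - t (n + 2) y) / 2)
      (-(Real.exp ((t (n + 1) x + t (n + 2) x) / 2) / 2)) x := by
    have h := ((hderiv (n + 1) x).sub (hderiv (n + 2) x)).div_const 2
    rw [hc2] at h
    refine h.congr_deriv ?_
    ring
  have H := (h1.exp).add (h2.exp)
  have key : Real.exp ((t (n + 1) x - t n x) / 2) * (Real.exp ((t n x + t (n + 1) x) / 2) / 2)
      + Real.exp ((t (n + 1) x - t (n + 2) x) / 2)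
        * (-(Real.exp ((t (n + 1) x + t (n + 2) x) / 2) / 2)) = 0 := by
    have e1 : Real.exp ((t (n + 1) x - t n x) / 2) * Real.exp ((t n x + t (n + 1) x) / 2)
        = Real.exp (t (n + 1) x) := by
      rw [← Real.exp_add]; ring_nf
    have e2 : Real.exp ((t (n + 1) x - t (n + 2) x) / 2)
        * Real.exp ((t (n + 1) x + t (n + 2) x) / 2) = Real.exp (t (n + 1) x) := by
      rw [← Real.exp_add]; ring_nf
    nlinarith [e1, e2]
  rw [key] at H
  exact H
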